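/- (Sharpness of the constant π^α in the inverse theorem) Let α > 0, ε > 0 and let k_0 be a positive integer with μ_{k_0} > 0. Then the function f*(x) = e^{ik_0 x} belongs to S_{p,μ} and there exists n_0 ∈ ℕ such that for all n > n_0, ω_α(f*, π/n)_{p,μ} > ((π^α − ε)/n^α) Σ_{ν=1}^{n} (ν^α − (ν−1)^α) E_ν(f*)_{p,μ}. -/

import Mathlib

open MeasureTheory Filter Topology Asymptotics

noncomputable section

/-- The `k`-th Fourier coefficient of a (2π-periodic) function `f : ℝ → ℂ`:
`f̂(k) = (2π)⁻¹ ∫_0^{2π} f(t) e^{-ikt} dt`. -/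
def fcoeff (f : ℝ → ℂ) (k : ℤ) : ℂ :=
  (1 / (2 * (Real.pi : ℂ))) *
    ∫ t in (0:ℝ)..(2 * Real.pi), f t * Complex.exp (-(Complex.I * (k : ℂ) * (t : ℂ)))

/-- The admissible set defining the Luxemburg norm:
`{a > 0 : Σ_k μ_k |f̂(k)/a|^{p_k} ≤ 1}` (with the sum required to converge). -/
def lpSet (p μ : ℤ → ℝ) (f : ℝ → ℂ) : Set ℝ :=
  {a : ℝ | 0 < a ∧
    Summable (fun k : ℤ => μ k * (‖fcoeff f k‖ / a) ^ (p k)) ∧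
    ∑' k : ℤ, μ k * (‖fcoeff f k‖ / a) ^ (p k) ≤ 1}

/-- The Luxemburg norm `‖f‖_{p,μ}`. -/
def luxNorm (p μ : ℤ → ℝ) (f : ℝ → ℂ) : ℝ := sInf (lpSet p μ f)

/-- Membership in the space `S_{p,μ}`: `f` is 2π-periodic, integrable on a period, and
has finite Luxemburg norm (i.e. the admissible set is nonempty). -/
def MemS (p μ : ℤ → ℝ) (f : ℝ → ℂ) : Prop :=
  Function.Periodic f (2 * Real.pi) ∧ IntervalIntegrable f volume 0 (2 * Real.pi) ∧
    (lpSet p μ f).Nonempty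

/-- Generalized binomial coefficient `binom(α,j) = α(α−1)⋯(α−j+1)/j!`. -/
def gbinom (α : ℝ) (j : ℕ) : ℝ :=
  (∏ i ∈ Finset.range j, (α - (i : ℝ))) / (j.factorial : ℝ)

/-- Fractional difference `Δ_h^α f(x) = Σ_{j=0}^∞ (−1)^j binom(α,j) f(x − jh)`. -/
def fracDiff (α h : ℝ) (f : ℝ → ℂ) (x : ℝ) : ℂ :=
  ∑' j : ℕ, (-1 : ℂ) ^ j * (gbinom α j : ℂ) * f (x - (j : ℝ) * h)

/-- Modulus of smoothness `ω_α(f,δ)_{p,μ} = sup_{|h| ≤ δ} ‖Δ_h^α f‖_{p,μ}`. -/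
def modulus (p μ : ℤ → ℝ) (α : ℝ) (f : ℝ → ℂ) (δ : ℝ) : ℝ :=
  ⨆ h : {h : ℝ // |h| ≤ δ}, luxNorm p μ (fracDiff α h.1 f)

/-- Trigonometric polynomial of degree at most `n - 1` with coefficients `c`:
`Σ_{|k| ≤ n-1} c_k e^{ikx}`. -/
def trigSum (c : ℤ → ℂ) (n : ℕ) (x : ℝ) : ℂ :=
  ∑ k ∈ Finset.Ioo (-(n : ℤ)) (n : ℤ), c k * Complex.exp (Complex.I * (k : ℂ) * (x : ℂ))

/-- Best approximation `E_n(f)_{p,μ}` of `f` by trigonometric polynomials of degree `≤ n-1`. -/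
def bestApprox (p μ : ℤ → ℝ) (n : ℕ) (f : ℝ → ℂ) : ℝ :=
  sInf {r : ℝ | ∃ c : ℤ → ℂ, r = luxNorm p μ (fun x => f x - trigSum c n x)}

/-- `g` is the ψ-derivative of `f`: `ĝ(k) = f̂(k)/ψ_k` for `k ≠ 0` (and `ĝ(0) = 0`),
with `g` 2π-periodic and integrable on a period. -/
def IsPsiDeriv (ψ : ℤ → ℂ) (f g : ℝ → ℂ) : Prop :=
  Function.Periodic g (2 * Real.pi) ∧ IntervalIntegrable g volume 0 (2 * Real.pi) ∧
    fcoeff g 0 = 0 ∧ ∀ k : ℤ, k ≠ 0 → fcoeff g k = fcoeff f k / ψ k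

/-- Trigonometric polynomial of degree at most `n`: `τ_n(x) = Σ_{|k| ≤ n} c_k e^{ikx}`. -/
def trigPoly (c : ℤ → ℂ) (n : ℕ) (x : ℝ) : ℂ :=
  ∑ k ∈ Finset.Icc (-(n : ℤ)) (n : ℤ), c k * Complex.exp (Complex.I * (k : ℂ) * (x : ℂ))

/-- ψ-derivative of the trigonometric polynomial with coefficients `c`:
`τ_n^ψ(x) = Σ_{0<|k|≤n} (c_k/ψ_k) e^{ikx}`. -/
def trigPolyPsi (ψ : ℤ → ℂ) (c : ℤ → ℂ) (n : ℕ) (x : ℝ) : ℂ :=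
  ∑ k ∈ Finset.Icc (-(n : ℤ)) (n : ℤ),
    (if k = 0 then 0 else c k / ψ k) * Complex.exp (Complex.I * (k : ℂ) * (x : ℂ))


lemma gbinom_zero (α : ℝ) : gbinom α 0 = 1 := by simp [gbinom]

lemma gbinom_succ (α : ℝ) (j : ℕ) :
    gbinom α (j + 1) = gbinom α j * ((α - j) / (j + 1)) := by
  unfold gbinom
  rw [Finset.prod_range_succ, Nat.factorial_succ, div_mul_div_comm]
  congr 1
  push_cast; ring

lemma summable_abs_gbinom {α : ℝ} (hα : 0 < α) :
    Summable (fun j : ℕ => |gbinom α j|) := by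
  set N : ℕ := ⌈α⌉₊ + 1 with hN
  have hNα : α < N := lt_of_le_of_lt (Nat.le_ceil α) (by exact_mod_cast Nat.lt_succ_self _)
  set t : ℕ → ℝ := fun j => |gbinom α (j + N)| with ht
  set u : ℕ → ℝ := fun j => t j * ((j + N : ℕ) + 1 : ℝ) with hu
  have htj : ∀ j, 0 ≤ t j := fun j => abs_nonneg _
  have hx : ∀ j : ℕ, α < ((j + N : ℕ) : ℝ) := fun j => by
    have : (N : ℝ) ≤ ((j + N : ℕ) : ℝ) := by exact_mod_cast Nat.le_add_left N j
    linarith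
  have hrec : ∀ j : ℕ, t (j + 1) = t j * ((((j + N : ℕ) : ℝ) - α) / (((j + N : ℕ) : ℝ) + 1)) := by
    intro j
    have h1 : (j + 1) + N = (j + N) + 1 := by ring
    have h2 : gbinom α ((j + N) + 1) = gbinom α (j + N) * ((α - (j + N : ℕ)) / ((j + N : ℕ) + 1)) :=
      gbinom_succ α (j + N)
    have hxj := hx j
    rw [ht]; simp only [h1, h2, abs_mul, abs_div]
    rw [abs_of_nonneg (by positivity : (0:ℝ) ≤ ((j + N : ℕ) : ℝ) + 1),
      abs_of_nonpos (by linarith : α - ((j + N : ℕ) : ℝ) ≤ 0)]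
    ring_nf
  have hkey : ∀ j : ℕ, α * t j ≤ u j - u (j + 1) := by
    intro j
    have hxj := hx j
    have hx1 : (0:ℝ) < ((j + N : ℕ) : ℝ) + 1 := by positivity
    have hcast : (((j+1) + N : ℕ) : ℝ) + 1 = ((j + N : ℕ) : ℝ) + 2 := by push_cast; ring
    rw [← sub_nonneg]
    have heq : u j - u (j + 1) - α * t j
        = t j * (1 + α) / (((j + N : ℕ) : ℝ) + 1) := by
      simp only [hu, hrec j, hcast]
      field_simp
      ring
    rw [heq]
    exact div_nonneg (mul_nonneg (htj j) (by linarith)) hx1.le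
  have hbound : ∀ m : ℕ, ∑ j ∈ Finset.range m, t j ≤ u 0 / α := by
    intro m
    rw [le_div_iff₀' hα]
    calc α * ∑ j ∈ Finset.range m, t j = ∑ j ∈ Finset.range m, α * t j := by
          rw [Finset.mul_sum]
      _ ≤ ∑ j ∈ Finset.range m, (u j - u (j + 1)) := Finset.sum_le_sum fun j _ => hkey j
      _ = u 0 - u m := Finset.sum_range_sub' u m
      _ ≤ u 0 := by
          have : 0 ≤ u m := mul_nonneg (htj m) (by positivity)
          linarith
  have hts : Summable t := summable_of_sum_range_le htj hbound
  exact (summable_nat_add_iff N).mp hts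

/-- complex coefficients -/
def bc (α : ℝ) (j : ℕ) : ℂ := (-1 : ℂ) ^ j * (gbinom α j : ℂ)

lemma norm_bc (α : ℝ) (j : ℕ) : ‖bc α j‖ = |gbinom α j| := by
  simp [bc, map_mul, abs_pow]

/-- the series -/
def Fb (α : ℝ) (z : ℂ) : ℂ := ∑' j : ℕ, bc α j * z ^ j

lemma bc_zero (α : ℝ) : bc α 0 = 1 := by simp [bc, gbinom_zero]

lemma bc_rec (α : ℝ) (j : ℕ) :
    bc α (j + 1) * ((j : ℂ) + 1) = ((j : ℂ) - α) * bc α j := by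
  have hr : gbinom α (j + 1) * ((j : ℝ) + 1) = gbinom α j * (α - j) := by
    rw [gbinom_succ]
    have : ((j : ℝ) + 1) ≠ 0 := by positivity
    field_simp
  have := congrArg (fun r : ℝ => (r : ℂ)) hr
  push_cast at this
  simp only [bc, pow_succ]
  calc (-1:ℂ)^j * -1 * (gbinom α (j+1) : ℂ) * ((j:ℂ)+1)
      = -((-1:ℂ)^j * ((gbinom α (j+1) : ℂ) * ((j:ℂ)+1))) := by ring
    _ = -((-1:ℂ)^j * ((gbinom α j : ℂ) * ((α:ℂ) - j))) := by rw [this]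
    _ = ((j:ℂ) - α) * ((-1:ℂ)^j * (gbinom α j : ℂ)) := by ring

lemma summable_bc_pow {α : ℝ} (hα : 0 < α) {z : ℂ} (hz : ‖z‖ ≤ 1) :
    Summable (fun j : ℕ => bc α j * z ^ j) := by
  apply Summable.of_norm_bounded (summable_abs_gbinom hα)
  intro j
  rw [norm_mul, norm_bc, norm_pow]
  calc |gbinom α j| * ‖z‖ ^ j ≤ |gbinom α j| * 1 ^ j :=
        mul_le_mul_of_nonneg_left (pow_le_pow_left₀ (norm_nonneg z) hz j) (abs_nonneg _)
    _ = |gbinom α j| := by simp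

lemma gbinom_le_tsum {α : ℝ} (hα : 0 < α) (j : ℕ) :
    |gbinom α j| ≤ ∑' i : ℕ, |gbinom α i| :=
  (summable_abs_gbinom hα).le_tsum j fun i _ => abs_nonneg _

lemma summable_bc_deriv {α : ℝ} (hα : 0 < α) {z : ℂ} (hz : ‖z‖ < 1) :
    Summable (fun j : ℕ => ‖bc α j * ((j : ℂ) * z ^ (j - 1))‖) := by
  set C : ℝ := ∑' i : ℕ, |gbinom α i|
  have hC : 0 ≤ C := tsum_nonneg fun i => abs_nonneg _
  have hs : Summable (fun j : ℕ => C * ((j : ℝ) * ‖z‖ ^ (j - 1))) := by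
    have h1 : Summable (fun j : ℕ => (j : ℝ) * ‖z‖ ^ (j - 1)) := by
      have h2 : Summable (fun j : ℕ => ((j + 1 : ℕ) : ℝ) * ‖z‖ ^ j) := by
        have := (summable_pow_mul_geometric_of_norm_lt_one (R := ℝ) 1
          (by rwa [Real.norm_eq_abs, abs_of_nonneg (norm_nonneg z)])).add
          (summable_geometric_of_norm_lt_one (x := ‖z‖)
            (by rwa [Real.norm_eq_abs, abs_of_nonneg (norm_nonneg z)]))
        apply this.congr
        intro j; push_cast; ring
      apply (summable_nat_add_iff 1).mp
      apply h2.congr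
      intro j
      simp
    exact h1.mul_left C
  apply Summable.of_nonneg_of_le (fun j => norm_nonneg _) _ hs
  intro j
  rw [norm_mul, norm_bc, norm_mul, norm_pow, Complex.norm_natCast]
  exact mul_le_mul_of_nonneg_right (gbinom_le_tsum hα j)
      (mul_nonneg (Nat.cast_nonneg j) (pow_nonneg (norm_nonneg z) _))

lemma hasDerivAt_Fb {α : ℝ} (hα : 0 < α) {z : ℂ} (hz : ‖z‖ < 1) :
    HasDerivAt (Fb α) (∑' j : ℕ, bc α j * ((j : ℂ) * z ^ (j - 1))) z := by
  set ρ : ℝ := (‖z‖ + 1) / 2 with hρ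
  have hρ0 : 0 < ρ := by positivity
  have hρ1 : ρ < 1 := by rw [hρ]; linarith
  have hzρ : ‖z‖ < ρ := by rw [hρ]; linarith
  set C : ℝ := ∑' i : ℕ, |gbinom α i| with hC
  have hC0 : 0 ≤ C := tsum_nonneg fun i => abs_nonneg _
  have hu : Summable (fun j : ℕ => C * ((j : ℝ) * ρ ^ (j - 1))) := by
    have h1 : Summable (fun j : ℕ => ((j + 1 : ℕ) : ℝ) * ρ ^ j) := by
      have := (summable_pow_mul_geometric_of_norm_lt_one (R := ℝ) 1
        (by rwa [Real.norm_eq_abs, abs_of_nonneg hρ0.le])).add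
        (summable_geometric_of_norm_lt_one (x := ρ)
          (by rwa [Real.norm_eq_abs, abs_of_nonneg hρ0.le]))
      apply this.congr; intro j; push_cast; ring
    have h2 : Summable (fun j : ℕ => (j : ℝ) * ρ ^ (j - 1)) := by
      apply (summable_nat_add_iff 1).mp
      apply h1.congr; intro j; simp
    exact h2.mul_left C
  have key := hasDerivAt_tsum_of_isPreconnected (F := ℂ) (𝕜 := ℂ)
    (u := fun j : ℕ => C * ((j : ℝ) * ρ ^ (j - 1)))
    (g := fun (j : ℕ) (w : ℂ) => bc α j * w ^ j)
    (g' := fun (j : ℕ) (w : ℂ) => bc α j * ((j : ℂ) * w ^ (j - 1)))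
    (t := Metric.ball (0 : ℂ) ρ) (y₀ := 0) (y := z)
    hu Metric.isOpen_ball (convex_ball (0:ℂ) ρ).isPreconnected
    (fun j w _ => (hasDerivAt_pow j w).const_mul (bc α j))
    ?_ (by simpa using hρ0) ?_ (by simpa using hzρ)
  · exact key
  · intro j w hw
    rw [Metric.mem_ball, dist_zero_right] at hw
    rw [norm_mul, norm_bc, norm_mul, norm_pow, Complex.norm_natCast]
    have h1 : ‖w‖ ^ (j - 1) ≤ ρ ^ (j - 1) := pow_le_pow_left₀ (norm_nonneg w) hw.le _
    calc |gbinom α j| * ((j:ℝ) * ‖w‖ ^ (j-1))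
        ≤ C * ((j:ℝ) * ‖w‖ ^ (j-1)) := mul_le_mul_of_nonneg_right (gbinom_le_tsum hα j)
          (mul_nonneg (Nat.cast_nonneg j) (pow_nonneg (norm_nonneg w) _))
      _ ≤ C * ((j:ℝ) * ρ ^ (j-1)) := by
          apply mul_le_mul_of_nonneg_left _ hC0
          exact mul_le_mul_of_nonneg_left h1 (Nat.cast_nonneg j)
  · apply Summable.of_norm_bounded (summable_abs_gbinom hα)
    intro j
    rw [norm_mul, norm_bc, norm_pow, norm_zero]
    rcases Nat.eq_zero_or_pos j with h | h
    · subst h; simp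
    · rw [zero_pow h.ne']; simp [abs_nonneg]

lemma Fb_ode {α : ℝ} (hα : 0 < α) {z : ℂ} (hz : ‖z‖ < 1) :
    (1 - z) * (∑' j : ℕ, bc α j * ((j : ℂ) * z ^ (j - 1))) = -(α : ℂ) * Fb α z := by
  have hsD : Summable (fun j : ℕ => bc α j * ((j : ℂ) * z ^ (j - 1))) :=
    Summable.of_norm (summable_bc_deriv hα hz)
  have hsF : Summable (fun j : ℕ => bc α j * z ^ j) := summable_bc_pow hα hz.le
  have h1 : (∑' j : ℕ, bc α j * ((j : ℂ) * z ^ (j - 1)))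
      = ∑' j : ℕ, ((j : ℂ) - α) * (bc α j * z ^ j) := by
    rw [hsD.tsum_eq_zero_add]
    simp only [Nat.cast_zero, zero_mul, mul_zero, zero_add]
    congr 1
    funext j
    have : bc α (j+1) * (((j+1 : ℕ) : ℂ) * z ^ ((j+1) - 1)) = (bc α (j+1) * ((j:ℂ)+1)) * z ^ j := by
      push_cast; ring
    rw [this, bc_rec]
    ring
  have h2 : ∀ j : ℕ, ((j : ℂ) - α) * (bc α j * z ^ j)
      = z * (bc α j * ((j : ℂ) * z ^ (j - 1))) - (α : ℂ) * (bc α j * z ^ j) := by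
    intro j
    rcases Nat.eq_zero_or_pos j with h | h
    · subst h; simp
    · obtain ⟨m, rfl⟩ := Nat.exists_eq_add_of_le h
      push_cast
      simp only [Nat.add_sub_cancel_left]
      ring
  have h3 : (∑' j : ℕ, ((j : ℂ) - α) * (bc α j * z ^ j))
      = z * (∑' j : ℕ, bc α j * ((j : ℂ) * z ^ (j - 1))) - (α : ℂ) * Fb α z := by
    rw [tsum_congr h2, Summable.tsum_sub (hsD.mul_left z) (hsF.mul_left (α : ℂ)),
      tsum_mul_left, tsum_mul_left]
    rfl
  linear_combination h1 + h3

lemma one_sub_mem_slitPlane {z : ℂ} (hz : ‖z‖ < 1) : (1 - z) ∈ Complex.slitPlane := by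
  rw [Complex.mem_slitPlane_iff]
  left
  have : z.re ≤ ‖z‖ := Complex.re_le_norm z
  simp only [Complex.sub_re, Complex.one_re]
  linarith

lemma one_sub_ne_zero {z : ℂ} (hz : ‖z‖ < 1) : (1 : ℂ) - z ≠ 0 :=
  Complex.slitPlane_ne_zero (one_sub_mem_slitPlane hz)

lemma Fb_eq_cpow {α : ℝ} (hα : 0 < α) {z : ℂ} (hz : ‖z‖ < 1) :
    Fb α z = (1 - z) ^ (α : ℂ) := by
  set φ : ℂ → ℂ := fun w => Fb α w * (1 - w) ^ (-(α : ℂ)) with hφ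
  have hderiv : ∀ w ∈ Metric.ball (0 : ℂ) 1, HasDerivAt φ 0 w := by
    intro w hw
    rw [Metric.mem_ball, dist_zero_right] at hw
    have hF := hasDerivAt_Fb hα hw
    have hbase : HasDerivAt (fun w : ℂ => 1 - w) (-1) w := by
      simpa using (hasDerivAt_id w).const_sub 1
    have hcp : HasDerivAt (fun w : ℂ => (1 - w) ^ (-(α : ℂ)))
        (-(α:ℂ) * (1 - w) ^ (-(α : ℂ) - 1) * (-1)) w :=
      HasDerivAt.cpow_const hbase (one_sub_mem_slitPlane hw)
    have := hF.mul hcp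
    refine this.congr_deriv ?_
    symm
    have h10 : (1 : ℂ) - w ≠ 0 := one_sub_ne_zero hw
    have hsplit : (1 - w) ^ (-(α : ℂ)) = (1 - w) ^ (-(α : ℂ) - 1) * (1 - w) := by
      have he : (-(α:ℂ)) = (-(α:ℂ) - 1) + 1 := by ring
      conv_lhs => rw [he, Complex.cpow_add _ _ h10, Complex.cpow_one]
    rw [hsplit]
    have hode := Fb_ode hα hw
    calc (0 : ℂ) = (((1 - w) * (∑' j : ℕ, bc α j * ((j : ℂ) * w ^ (j - 1)))) - (-(α:ℂ) * Fb α w)) * (1 - w) ^ (-(α : ℂ) - 1) := by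
          rw [hode]; ring
      _ = (∑' j : ℕ, bc α j * ((j:ℂ) * w ^ (j-1))) * ((1-w) ^ (-(α:ℂ)-1) * (1-w)) + Fb α w * (-(α:ℂ) * (1-w) ^ (-(α:ℂ)-1) * -1) := by
          ring
  have hconst : φ z = φ 0 := by
    apply Convex.is_const_of_fderivWithin_eq_zero (𝕜 := ℂ) (convex_ball (0:ℂ) 1)
      (f := φ) _ _ (by simpa using hz) (by simp [Metric.mem_ball])
    · intro w hw
      exact (hderiv w hw).differentiableAt.differentiableWithinAt
    · intro w hw
      rw [fderivWithin_of_isOpen Metric.isOpen_ball hw]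
      have := (hderiv w hw).hasFDerivAt.fderiv
      rw [this]
      ext v
      simp
  have hφ0 : φ 0 = 1 := by
    have hF0 : Fb α 0 = 1 := by
      rw [Fb, tsum_eq_single 0]
      · simp [bc_zero]
      · intro j hj
        rw [zero_pow hj, mul_zero]
    simp [hφ, hF0]
  have h10 : (1 : ℂ) - z ≠ 0 := one_sub_ne_zero hz
  have : Fb α z * ((1 - z) ^ (-(α : ℂ)) * (1 - z) ^ (α : ℂ)) = (1 - z) ^ (α : ℂ) := by
    have := hconst.trans hφ0
    rw [hφ] at this
    simp only at this
    rw [← mul_assoc, this, one_mul]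
  rwa [← Complex.cpow_add _ _ h10, neg_add_cancel, Complex.cpow_zero, mul_one] at this

lemma Fb_boundary {α : ℝ} (hα : 0 < α) {z0 : ℂ} (hz0 : ‖z0‖ = 1) (hre : z0.re < 1) :
    Fb α z0 = (1 - z0) ^ (α : ℂ) := by
  have hslit : (1 - z0) ∈ Complex.slitPlane := by
    rw [Complex.mem_slitPlane_iff]
    left
    simp only [Complex.sub_re, Complex.one_re]
    linarith
  have l : Filter ℝ := nhdsWithin 1 (Set.Iio 1)
  have hIoo : Set.Ioo (0:ℝ) 1 ∈ nhdsWithin (1:ℝ) (Set.Iio 1) :=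
    Ioo_mem_nhdsLT_of_mem (by constructor <;> norm_num)
  -- limit of the series
  have hA : Tendsto (fun r : ℝ => Fb α ((r : ℂ) * z0)) (nhdsWithin 1 (Set.Iio 1))
      (nhds (Fb α z0)) := by
    apply tendsto_tsum_of_dominated_convergence (bound := fun j : ℕ => |gbinom α j|)
      (summable_abs_gbinom hα)
    · intro j
      have hc : Tendsto (fun r : ℝ => bc α j * ((r : ℂ) * z0) ^ j) (nhds 1)
          (nhds (bc α j * (((1:ℝ) : ℂ) * z0) ^ j)) := by
        apply Tendsto.const_mul
        exact (((Complex.continuous_ofReal.mul continuous_const).pow j).tendsto 1)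
      simp only [Complex.ofReal_one, one_mul] at hc
      exact hc.mono_left nhdsWithin_le_nhds
    · filter_upwards [hIoo] with r hr
      intro j
      rw [norm_mul, norm_bc, norm_pow, norm_mul, hz0, mul_one, Complex.norm_real,
        Real.norm_eq_abs, abs_of_pos hr.1]
      calc |gbinom α j| * r ^ j ≤ |gbinom α j| * 1 := by
            apply mul_le_mul_of_nonneg_left _ (abs_nonneg _)
            exact pow_le_one₀ hr.1.le hr.2.le
        _ = |gbinom α j| := mul_one _
  -- limit of the cpow
  have hB : Tendsto (fun r : ℝ => ((1 : ℂ) - (r : ℂ) * z0) ^ (α : ℂ))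
      (nhdsWithin 1 (Set.Iio 1)) (nhds ((1 - z0) ^ (α : ℂ))) := by
    have hcont : ContinuousAt (fun r : ℝ => ((1 : ℂ) - (r : ℂ) * z0) ^ (α : ℂ)) 1 := by
      apply ContinuousAt.cpow
      · exact (continuousAt_const.sub ((Complex.continuous_ofReal.continuousAt).mul
          continuousAt_const))
      · exact continuousAt_const
      · simpa using hslit
    have := hcont.tendsto
    simp only [Complex.ofReal_one, one_mul] at this
    exact this.mono_left nhdsWithin_le_nhds
  -- eventual equality
  have heq : ∀ᶠ (r : ℝ) in nhdsWithin (1:ℝ) (Set.Iio (1:ℝ)),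
      Fb α ((r : ℂ) * z0) = ((1 : ℂ) - (r : ℂ) * z0) ^ (α : ℂ) := by
    filter_upwards [hIoo] with r hr
    apply Fb_eq_cpow hα
    rw [norm_mul, hz0, mul_one, Complex.norm_real, Real.norm_eq_abs, abs_of_pos hr.1]
    exact hr.2
  have : Tendsto (fun r : ℝ => Fb α ((r : ℂ) * z0)) (nhdsWithin 1 (Set.Iio 1))
      (nhds ((1 - z0) ^ (α : ℂ))) := Tendsto.congr' (heq.mono fun r h => h.symm) hB
  exact tendsto_nhds_unique hA this

lemma neg_I_mul_eq (k0 : ℕ) (x : ℝ) :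
    -(Complex.I * (k0 : ℂ) * (x : ℂ)) = ((-((k0 : ℝ) * x) : ℝ) : ℂ) * Complex.I := by
  push_cast; ring

lemma abs_w_eq_one (k0 : ℕ) (x : ℝ) :
    ‖Complex.exp (-(Complex.I * (k0 : ℂ) * (x : ℂ)))‖ = 1 := by
  rw [neg_I_mul_eq]
  exact Complex.norm_exp_ofReal_mul_I _

lemma tendsto_main {α : ℝ} (hα : 0 < α) {k0 : ℕ} (hk0 : 0 < k0) :
    Tendsto (fun n : ℕ => (n : ℝ) ^ α *
        ‖Fb α (Complex.exp
          (-(Complex.I * (k0 : ℂ) * ((Real.pi / (n : ℝ) : ℝ) : ℂ))))‖)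
      atTop (nhds (((k0 : ℝ) * Real.pi) ^ α)) := by
  set g : ℝ → ℂ := fun s => 1 - Complex.exp (-(Complex.I * (k0 : ℂ) * (s : ℂ))) with hg
  have hg0 : g 0 = 0 := by simp [hg]
  have hd : HasDerivAt g (Complex.I * (k0 : ℂ)) 0 := by
    have h1 : HasDerivAt (fun s : ℝ => ((s : ℂ))) 1 0 := by
      exact (Complex.ofRealCLM.hasDerivAt (x := (0:ℝ)))
    have h2 : HasDerivAt (fun s : ℝ => (-(Complex.I * (k0 : ℂ))) * (s : ℂ))
        (-(Complex.I * (k0 : ℂ))) 0 := by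
      simpa using h1.const_mul (-(Complex.I * (k0 : ℂ)))
    have h3 := h2.cexp
    have h4 := h3.const_sub 1
    have h5 : (fun s : ℝ => 1 - Complex.exp (-(Complex.I * (k0 : ℂ)) * (s : ℂ))) = g := by
      funext s; rw [hg]; ring_nf
    rw [h5] at h4
    refine h4.congr_deriv ?_
    simp [Complex.exp_zero]
  have hslope : Tendsto (slope g 0) (nhdsWithin 0 {x | x ≠ 0})
      (nhds (Complex.I * (k0 : ℂ))) := hasDerivAt_iff_tendsto_slope.mp hd
  have hs : Tendsto (fun n : ℕ => Real.pi / (n : ℝ)) atTop (nhdsWithin 0 {x | x ≠ 0}) := by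
    apply tendsto_nhdsWithin_of_tendsto_nhds_of_eventually_within
    · exact tendsto_const_div_atTop_nhds_zero_nat Real.pi
    · filter_upwards [eventually_ge_atTop 1] with n hn
      have : (0:ℝ) < Real.pi / n :=
        div_pos Real.pi_pos (by exact_mod_cast hn)
      exact ne_of_gt this
  have hcomp := (hslope.comp hs).norm
  have hnorm : ‖Complex.I * (k0 : ℂ)‖ = (k0 : ℝ) := by simp
  rw [hnorm] at hcomp
  have hmul := hcomp.const_mul Real.pi
  have hA : Tendsto (fun n : ℕ => (n : ℝ) * ‖g (Real.pi / (n : ℝ))‖)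
      atTop (nhds ((k0 : ℝ) * Real.pi)) := by
    rw [show (k0 : ℝ) * Real.pi = Real.pi * (k0:ℝ) from mul_comm _ _]
    apply Tendsto.congr' _ hmul
    filter_upwards [eventually_ge_atTop 1] with n hn
    have hn0 : (0:ℝ) < (n : ℝ) := by exact_mod_cast hn
    have hsn : (0:ℝ) < Real.pi / n := div_pos Real.pi_pos hn0
    have h6 : slope g 0 (Real.pi / (n:ℝ)) = ((Real.pi / (n:ℝ))⁻¹ : ℝ) • g (Real.pi / (n:ℝ)) := by
      rw [slope_def_module, hg0, sub_zero, sub_zero]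
    rw [Function.comp_apply, h6, norm_smul, norm_inv, Real.norm_eq_abs, abs_of_pos hsn,
      inv_div]
    field_simp
  have hArpow := hA.rpow_const (p := α) (Or.inr hα.le)
  apply Tendsto.congr' _ hArpow
  filter_upwards [eventually_ge_atTop (k0 + 1)] with n hn
  have hn0 : (0:ℝ) < (n:ℝ) := by
    have : (1:ℕ) ≤ n := le_trans (Nat.succ_le_succ (Nat.zero_le _)) hn
    exact_mod_cast this
  have hθpos : 0 < (k0:ℝ) * (Real.pi / n) :=
    mul_pos (by exact_mod_cast hk0) (div_pos Real.pi_pos hn0)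
  have hθlt : (k0:ℝ) * (Real.pi / n) ≤ Real.pi := by
    rw [mul_div_assoc', div_le_iff₀ hn0]
    have hkn : (k0:ℝ) ≤ (n:ℝ) := by exact_mod_cast Nat.le_of_succ_le hn
    calc (k0:ℝ) * Real.pi ≤ (n:ℝ) * Real.pi :=
          mul_le_mul_of_nonneg_right hkn Real.pi_pos.le
      _ = Real.pi * (n:ℝ) := mul_comm _ _
  set w : ℂ := Complex.exp (-(Complex.I * (k0 : ℂ) * ((Real.pi / (n : ℝ) : ℝ) : ℂ))) with hw
  have habs : ‖w‖ = 1 := by rw [hw]; exact abs_w_eq_one k0 _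
  have hre : w.re < 1 := by
    rw [hw, neg_I_mul_eq, Complex.exp_ofReal_mul_I_re, Real.cos_neg]
    calc Real.cos ((k0:ℝ) * (Real.pi / n)) < Real.cos 0 :=
          Real.cos_lt_cos_of_nonneg_of_le_pi le_rfl hθlt hθpos
      _ = 1 := Real.cos_zero
  have hFb := Fb_boundary hα habs hre
  show ((n:ℝ) * ‖g (Real.pi / (n:ℝ))‖) ^ α = (n:ℝ) ^ α * ‖Fb α w‖
  rw [hFb, Complex.norm_cpow_real,
    Real.mul_rpow hn0.le (norm_nonneg _)]

lemma fcoeff_cexp (c : ℂ) (m k : ℤ) :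
    fcoeff (fun x => c * Complex.exp (Complex.I * (m : ℂ) * (x : ℝ))) k
      = if k = m then c else 0 := by
  unfold fcoeff
  have hrw : ∀ t : ℝ, c * Complex.exp (Complex.I * (m : ℂ) * (t : ℂ))
      * Complex.exp (-(Complex.I * (k : ℂ) * (t : ℂ)))
      = c * Complex.exp ((Complex.I * ((m : ℂ) - (k : ℂ))) * (t : ℂ)) := by
    intro t
    rw [mul_assoc, ← Complex.exp_add]
    ring_nf
  rw [intervalIntegral.integral_congr (fun t _ => hrw t)]
  rw [intervalIntegral.integral_const_mul]
  rcases eq_or_ne k m with h | h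
  · subst h
    simp only [sub_self, mul_zero, zero_mul, Complex.exp_zero]
    rw [intervalIntegral.integral_const]
    simp only [if_true]
    have hπ : (Real.pi : ℂ) ≠ 0 := by
      exact_mod_cast Complex.ofReal_ne_zero.mpr Real.pi_ne_zero
    push_cast
    field_simp
    simp only [sub_zero, Complex.real_smul, mul_one]; push_cast; ring
  · have hc : Complex.I * ((m : ℂ) - (k : ℂ)) ≠ 0 := by
      apply mul_ne_zero Complex.I_ne_zero
      rw [sub_ne_zero]
      exact_mod_cast fun hh => h (by exact_mod_cast hh.symm)
    rw [if_neg h]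
    have := integral_exp_mul_complex (a := (0:ℝ)) (b := 2 * Real.pi) hc
    rw [this]
    have hexp : Complex.exp (Complex.I * ((m : ℂ) - (k : ℂ)) * ((2 * Real.pi : ℝ) : ℂ))
        = 1 := by
      have : Complex.I * ((m : ℂ) - (k : ℂ)) * ((2 * Real.pi : ℝ) : ℂ)
          = ((m - k : ℤ) : ℂ) * (2 * (Real.pi : ℂ) * Complex.I) := by
        push_cast; ring
      rw [this]
      exact_mod_cast Complex.exp_int_mul_two_pi_mul_I (m - k)
    rw [hexp]
    simp

lemma lpSet_cexp {p μ : ℤ → ℝ} (hp : ∀ k : ℤ, 1 ≤ p k) (hμ : ∀ k : ℤ, 0 ≤ μ k)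
    {m : ℤ} (hμm : 0 < μ m) (c : ℂ) :
    lpSet p μ (fun x => c * Complex.exp (Complex.I * (m : ℂ) * (x : ℝ)))
      = {a : ℝ | 0 < a ∧ ‖c‖ * (μ m) ^ (1 / p m) ≤ a} := by
  have hpm : (0:ℝ) < p m := lt_of_lt_of_le one_pos (hp m)
  have hM : (0:ℝ) < (μ m) ^ (1 / p m) := Real.rpow_pos_of_pos hμm _
  have h3 : (1 / μ m) ^ (1 / p m) = 1 / (μ m) ^ (1 / p m) := by
    rw [one_div (μ m), Real.inv_rpow hμm.le, one_div, one_div]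
  ext a
  simp only [lpSet, Set.mem_setOf_eq]
  by_cases ha : 0 < a
  swap
  · constructor
    · rintro ⟨h, -⟩; exact absurd h ha
    · rintro ⟨h, -⟩; exact absurd h ha
  have hterm : (fun k : ℤ =>
      μ k * (‖fcoeff (fun x => c * Complex.exp (Complex.I * (m:ℂ) * (x:ℝ))) k‖ / a) ^ (p k))
      = fun k : ℤ => if k = m then μ m * (‖c‖ / a) ^ (p m) else 0 := by
    funext k
    rw [fcoeff_cexp]
    rcases eq_or_ne k m with h | h
    · subst h; simp
    · rw [if_neg h, if_neg h, norm_zero, zero_div,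
        Real.zero_rpow (ne_of_gt (lt_of_lt_of_le one_pos (hp k))), mul_zero]
  rw [hterm]
  have hsummable : Summable (fun k : ℤ =>
      if k = m then μ m * (‖c‖ / a) ^ (p m) else 0) := by
    apply summable_of_ne_finset_zero (s := {m})
    intro k hk
    exact if_neg (by simpa using hk)
  have hca0 : 0 ≤ ‖c‖ / a := div_nonneg (norm_nonneg _) ha.le
  constructor
  · rintro ⟨-, -, hsum⟩
    refine ⟨ha, ?_⟩
    rw [tsum_ite_eq] at hsum
    have h1 : (‖c‖ / a) ^ (p m) ≤ 1 / μ m := by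
      rw [le_div_iff₀ hμm]; linarith [hsum]
    have h2 : ((‖c‖ / a) ^ (p m)) ^ (1 / p m) ≤ (1 / μ m) ^ (1 / p m) :=
      Real.rpow_le_rpow (Real.rpow_nonneg hca0 _) h1 (by positivity)
    rw [← Real.rpow_mul hca0, mul_one_div_cancel (ne_of_gt hpm), Real.rpow_one, h3] at h2
    rw [← one_mul a]
    rw [div_le_div_iff₀ ha hM] at h2
    linarith [h2]
  · rintro ⟨-, hge⟩
    refine ⟨ha, hsummable, ?_⟩
    rw [tsum_ite_eq]
    have hca : ‖c‖ / a ≤ (1 / μ m) ^ (1 / p m) := by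
      rw [h3, div_le_div_iff₀ ha hM]
      linarith [hge]
    have h4 : (‖c‖ / a) ^ (p m) ≤ ((1 / μ m) ^ (1 / p m)) ^ (p m) :=
      Real.rpow_le_rpow hca0 hca hpm.le
    rw [← Real.rpow_mul (by positivity), one_div_mul_cancel (ne_of_gt hpm),
      Real.rpow_one] at h4
    calc μ m * (‖c‖ / a) ^ (p m) ≤ μ m * (1 / μ m) :=
          mul_le_mul_of_nonneg_left h4 (hμ m)
      _ = 1 := by field_simp

lemma luxNorm_cexp {p μ : ℤ → ℝ} (hp : ∀ k : ℤ, 1 ≤ p k) (hμ : ∀ k : ℤ, 0 ≤ μ k)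
    {m : ℤ} (hμm : 0 < μ m) (c : ℂ) :
    luxNorm p μ (fun x => c * Complex.exp (Complex.I * (m : ℂ) * (x : ℝ)))
      = ‖c‖ * (μ m) ^ (1 / p m) := by
  have hM : (0:ℝ) < (μ m) ^ (1 / p m) := Real.rpow_pos_of_pos hμm _
  rw [luxNorm, lpSet_cexp hp hμ hμm c]
  rcases eq_or_ne c 0 with hc | hc
  · subst hc
    simp only [norm_zero, zero_mul]
    have : {a : ℝ | 0 < a ∧ (0:ℝ) ≤ a} = Set.Ioi 0 := by
      ext a; simp only [Set.mem_setOf_eq, Set.mem_Ioi]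
      exact ⟨fun h => h.1, fun h => ⟨h, h.le⟩⟩
    rw [this, csInf_Ioi]
  · have hcM : 0 < ‖c‖ * (μ m) ^ (1 / p m) :=
      mul_pos (norm_pos_iff.mpr hc) hM
    have : {a : ℝ | 0 < a ∧ ‖c‖ * (μ m) ^ (1 / p m) ≤ a}
        = Set.Ici (‖c‖ * (μ m) ^ (1 / p m)) := by
      ext a; simp only [Set.mem_setOf_eq, Set.mem_Ici]
      exact ⟨fun h => h.2, fun h => ⟨lt_of_lt_of_le hcM h, h⟩⟩
    rw [this, csInf_Ici]

lemma luxNorm_nonneg (p μ : ℤ → ℝ) (f : ℝ → ℂ) : 0 ≤ luxNorm p μ f := by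
  apply Real.sInf_nonneg
  intro a ha
  exact ha.1.le


lemma fracDiff_cexp {α : ℝ} (k0 : ℕ) (fstar : ℝ → ℂ)
    (hfstar : ∀ x : ℝ, fstar x = Complex.exp (Complex.I * (k0 : ℂ) * (x : ℝ))) (h : ℝ) :
    fracDiff α h fstar = fun x : ℝ =>
      Fb α (Complex.exp (-(Complex.I * (k0 : ℂ) * (h : ℂ)))) *
        Complex.exp (Complex.I * (k0 : ℂ) * (x : ℝ)) := by
  funext x
  unfold fracDiff
  have hterm : ∀ j : ℕ, (-1 : ℂ) ^ j * ((gbinom α j : ℝ) : ℂ) * fstar (x - (j : ℝ) * h)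
      = Complex.exp (Complex.I * (k0 : ℂ) * (x : ℝ)) *
        (bc α j * (Complex.exp (-(Complex.I * (k0 : ℂ) * (h : ℂ)))) ^ j) := by
    intro j
    rw [hfstar]
    have he : Complex.I * (k0 : ℂ) * ((x - (j : ℝ) * h : ℝ) : ℂ)
        = Complex.I * (k0 : ℂ) * (x : ℂ) + (j : ℕ) * (-(Complex.I * (k0 : ℂ) * (h : ℂ))) := by
      push_cast; ring
    rw [he, Complex.exp_add, Complex.exp_nat_mul]
    simp only [bc]
    ring
  rw [tsum_congr hterm, tsum_mul_left]
  rw [Fb]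
  ring

/-- sharpness of the constant `π^α`: for `f*(x) = e^{ik₀x}` with `μ_{k₀} > 0`,
`f* ∈ S_{p,μ}` and for all large `n`,
`ω_α(f*, π/n)_{p,μ} > ((π^α − ε)/n^α) Σ_{ν=1}^n (ν^α − (ν−1)^α) E_ν(f*)_{p,μ}`. -/
theorem stmt_16 (K : ℝ) (p μ : ℤ → ℝ) (hp : ∀ k : ℤ, 1 ≤ p k ∧ p k ≤ K)
    (hμ : ∀ k : ℤ, 0 ≤ μ k) (α ε : ℝ) (hα : 0 < α) (hε : 0 < ε)
    (k0 : ℕ) (hk0 : 0 < k0) (hμk0 : 0 < μ (k0 : ℤ)) (fstar : ℝ → ℂ)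
    (hfstar : ∀ x : ℝ, fstar x = Complex.exp (Complex.I * (k0 : ℂ) * (x : ℂ))) :
    MemS p μ fstar ∧ ∃ n0 : ℕ, ∀ n : ℕ, n0 < n →
      modulus p μ α fstar (Real.pi / n) >
        ((Real.pi ^ α - ε) / (n : ℝ) ^ α) *
          ∑ ν ∈ Finset.Icc 1 n,
            ((ν : ℝ) ^ α - ((ν : ℝ) - 1) ^ α) * bestApprox p μ ν fstar := by
  have hp' : ∀ k : ℤ, 1 ≤ p k := fun k => (hp k).1
  have hcast : ((k0 : ℕ) : ℂ) = (((k0 : ℤ) : ℤ) : ℂ) := by push_cast; rfl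
  set M : ℝ := (μ (k0 : ℤ)) ^ (1 / p (k0 : ℤ)) with hMdef
  have hM : 0 < M := Real.rpow_pos_of_pos hμk0 _
  have hfstar' : fstar = fun x : ℝ =>
      (1 : ℂ) * Complex.exp (Complex.I * (((k0 : ℤ) : ℤ) : ℂ) * (x : ℝ)) := by
    funext x; rw [hfstar, ← hcast, one_mul]
  -- luxNorm of fstar
  have hluxf : luxNorm p μ fstar = M := by
    rw [hfstar', luxNorm_cexp hp' hμ hμk0, norm_one, one_mul]
  -- MemS
  have hmem : MemS p μ fstar := by
    refine ⟨?_, ?_, ?_⟩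
    · intro x
      rw [hfstar, hfstar]
      have he : Complex.I * (k0 : ℂ) * ((x + 2 * Real.pi : ℝ) : ℂ)
          = Complex.I * (k0 : ℂ) * (x : ℂ) + (k0 : ℕ) * (2 * (Real.pi : ℂ) * Complex.I) := by
        push_cast; ring
      rw [he, Complex.exp_add, Complex.exp_nat_mul_two_pi_mul_I, mul_one]
    · have hc : Continuous fstar := by
        rw [hfstar']
        exact continuous_const.mul (Complex.continuous_exp.comp (by continuity))
      exact hc.intervalIntegrable 0 (2 * Real.pi)
    · rw [hfstar', lpSet_cexp hp' hμ hμk0]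
      refine ⟨‖(1:ℂ)‖ * M + 1, ?_, ?_⟩
      · simp only [norm_one, one_mul]; linarith
      · linarith
  refine ⟨hmem, ?_⟩
  -- best approximation facts
  have hbddBelow : ∀ ν : ℕ, BddBelow {r : ℝ | ∃ c : ℤ → ℂ,
      r = luxNorm p μ (fun x => fstar x - trigSum c ν x)} := by
    intro ν
    exact ⟨0, fun r hr => by obtain ⟨c, rfl⟩ := hr; exact luxNorm_nonneg _ _ _⟩
  have hE_nonneg : ∀ ν : ℕ, 0 ≤ bestApprox p μ ν fstar := by
    intro ν
    apply Real.sInf_nonneg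
    intro r hr
    obtain ⟨c, rfl⟩ := hr
    exact luxNorm_nonneg _ _ _
  have hEle : ∀ ν : ℕ, bestApprox p μ ν fstar ≤ M := by
    intro ν
    apply csInf_le (hbddBelow ν)
    refine ⟨fun _ => 0, ?_⟩
    have h0 : (fun x => fstar x - trigSum (fun _ => 0) ν x)
        = fun x : ℝ => (1 : ℂ) * Complex.exp (Complex.I * (((k0 : ℤ) : ℤ) : ℂ) * (x : ℝ)) := by
      funext x
      simp only [trigSum, zero_mul, Finset.sum_const_zero, sub_zero]
      rw [hfstar, ← hcast, one_mul]
    rw [h0, luxNorm_cexp hp' hμ hμk0, norm_one, one_mul]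
  have hE0 : ∀ ν : ℕ, k0 < ν → bestApprox p μ ν fstar = 0 := by
    intro ν hν
    have hmem0 : (0 : ℝ) ∈ {r : ℝ | ∃ c : ℤ → ℂ,
        r = luxNorm p μ (fun x => fstar x - trigSum c ν x)} := by
      refine ⟨fun k => if k = (k0 : ℤ) then 1 else 0, ?_⟩
      have h1 : (fun x => fstar x - trigSum (fun k => if k = (k0 : ℤ) then 1 else 0) ν x)
          = fun x : ℝ => (0 : ℂ) * Complex.exp (Complex.I * (((k0 : ℤ) : ℤ) : ℂ) * (x : ℝ)) := by
        funext x
        have hm_mem : (k0 : ℤ) ∈ Finset.Ioo (-(ν : ℤ)) (ν : ℤ) := by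
          rw [Finset.mem_Ioo]
          have h2 : ((k0 : ℕ) : ℤ) < ((ν : ℕ) : ℤ) := by exact_mod_cast hν
          have h3 : (0 : ℤ) ≤ ((k0 : ℕ) : ℤ) := Int.ofNat_nonneg k0
          omega
        rw [trigSum]
        simp only [ite_mul, one_mul, zero_mul]
        rw [Finset.sum_ite_eq' (Finset.Ioo (-(ν : ℤ)) (ν : ℤ)) ((k0 : ℤ))
            (fun k => Complex.exp (Complex.I * (k : ℂ) * (x : ℝ)))]
        rw [if_pos hm_mem, hfstar, ← hcast]
        simp
      rw [h1, luxNorm_cexp hp' hμ hμk0, norm_zero, zero_mul]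
    exact le_antisymm (csInf_le (hbddBelow ν) hmem0) (hE_nonneg ν)
  -- factor nonnegativity
  have hfac : ∀ ν : ℕ, 1 ≤ ν → 0 ≤ (ν : ℝ) ^ α - ((ν : ℝ) - 1) ^ α := by
    intro ν hν
    have h1 : (0 : ℝ) ≤ (ν : ℝ) - 1 := by
      have : (1 : ℝ) ≤ (ν : ℝ) := by exact_mod_cast hν
      linarith
    have := Real.rpow_le_rpow h1 (show (ν : ℝ) - 1 ≤ (ν : ℝ) by linarith) hα.le
    linarith
  -- telescoping bound
  have htel : ∑ ν ∈ Finset.Icc 1 k0, ((ν : ℝ) ^ α - ((ν : ℝ) - 1) ^ α) = (k0 : ℝ) ^ α := by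
    rw [← Finset.Ico_add_one_right_eq_Icc, Finset.sum_Ico_eq_sum_range]
    have hrw : ∀ i ∈ Finset.range (k0 + 1 - 1),
        (((1 + i : ℕ) : ℝ) ^ α - (((1 + i : ℕ) : ℝ) - 1) ^ α)
          = (((i + 1 : ℕ) : ℝ) ^ α - ((i : ℕ) : ℝ) ^ α) := by
      intro i _
      have e1 : ((1 + i : ℕ) : ℝ) = ((i + 1 : ℕ) : ℝ) := by push_cast; ring
      have e2 : ((1 + i : ℕ) : ℝ) - 1 = ((i : ℕ) : ℝ) := by push_cast; ring
      rw [e2, e1]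
    rw [Finset.sum_congr rfl hrw]
    have := Finset.sum_range_sub (f := fun i : ℕ => ((i : ℕ) : ℝ) ^ α) k0
    simp only [Nat.add_sub_cancel]
    rw [this]
    simp [Real.zero_rpow hα.ne']
  have hsum_le : ∀ n : ℕ, k0 ≤ n →
      (∑ ν ∈ Finset.Icc 1 n, ((ν : ℝ) ^ α - ((ν : ℝ) - 1) ^ α) * bestApprox p μ ν fstar)
        ≤ (k0 : ℝ) ^ α * M := by
    intro n hn
    have hstep : ∀ ν ∈ Finset.Icc 1 n,
        ((ν : ℝ) ^ α - ((ν : ℝ) - 1) ^ α) * bestApprox p μ ν fstar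
          ≤ (if ν ≤ k0 then ((ν : ℝ) ^ α - ((ν : ℝ) - 1) ^ α) * M else 0) := by
      intro ν hνmem
      rw [Finset.mem_Icc] at hνmem
      by_cases hk : ν ≤ k0
      · rw [if_pos hk]
        exact mul_le_mul_of_nonneg_left (hEle ν) (hfac ν hνmem.1)
      · rw [if_neg hk, hE0 ν (not_le.mp hk), mul_zero]
    calc (∑ ν ∈ Finset.Icc 1 n, ((ν : ℝ) ^ α - ((ν : ℝ) - 1) ^ α) * bestApprox p μ ν fstar)
        ≤ ∑ ν ∈ Finset.Icc 1 n,
            (if ν ≤ k0 then ((ν : ℝ) ^ α - ((ν : ℝ) - 1) ^ α) * M else 0) :=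
          Finset.sum_le_sum hstep
      _ = ∑ ν ∈ (Finset.Icc 1 n).filter (· ≤ k0),
            ((ν : ℝ) ^ α - ((ν : ℝ) - 1) ^ α) * M := (Finset.sum_filter _ _).symm
      _ = ∑ ν ∈ Finset.Icc 1 k0, ((ν : ℝ) ^ α - ((ν : ℝ) - 1) ^ α) * M := by
          congr 1
          ext ν
          simp only [Finset.mem_filter, Finset.mem_Icc]
          omega
      _ = (∑ ν ∈ Finset.Icc 1 k0, ((ν : ℝ) ^ α - ((ν : ℝ) - 1) ^ α)) * M :=
          (Finset.sum_mul _ _ _).symm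
      _ = (k0 : ℝ) ^ α * M := by rw [htel]
  -- modulus machinery
  have hWabs : ∀ h : ℝ,
      ‖Complex.exp (-(Complex.I * (k0 : ℂ) * (h : ℂ)))‖ = 1 :=
    fun h => abs_w_eq_one k0 h
  have hfracnorm : ∀ h : ℝ, luxNorm p μ (fracDiff α h fstar)
      = ‖Fb α (Complex.exp (-(Complex.I * (k0 : ℂ) * (h : ℂ))))‖ * M := by
    intro h
    rw [fracDiff_cexp k0 fstar hfstar h]
    have h1 : (fun x : ℝ => Fb α (Complex.exp (-(Complex.I * (k0 : ℂ) * (h : ℂ)))) *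
        Complex.exp (Complex.I * (k0 : ℂ) * (x : ℝ)))
        = fun x : ℝ => Fb α (Complex.exp (-(Complex.I * (k0 : ℂ) * (h : ℂ)))) *
          Complex.exp (Complex.I * (((k0 : ℤ) : ℤ) : ℂ) * (x : ℝ)) := by
      funext x; rw [← hcast]
    rw [h1, luxNorm_cexp hp' hμ hμk0]
  set Csum : ℝ := ∑' j : ℕ, |gbinom α j| with hCsum
  have hFbound : ∀ h : ℝ,
      ‖Fb α (Complex.exp (-(Complex.I * (k0 : ℂ) * (h : ℂ))))‖ ≤ Csum := by
    intro h
    have hnn : ∀ j : ℕ, ‖bc α j * (Complex.exp (-(Complex.I * (k0 : ℂ) * (h : ℂ)))) ^ j‖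
        = |gbinom α j| := by
      intro j
      rw [norm_mul, norm_bc, norm_pow, hWabs h, one_pow, mul_one]
    have hsumm : Summable (fun j : ℕ =>
        ‖bc α j * (Complex.exp (-(Complex.I * (k0 : ℂ) * (h : ℂ)))) ^ j‖) :=
      (summable_abs_gbinom hα).congr (fun j => (hnn j).symm)
    rw [Fb]
    calc ‖∑' j : ℕ, bc α j * (Complex.exp (-(Complex.I * (k0 : ℂ) * (h : ℂ)))) ^ j‖
        ≤ ∑' j : ℕ, ‖bc α j * (Complex.exp (-(Complex.I * (k0 : ℂ) * (h : ℂ)))) ^ j‖ :=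
          norm_tsum_le_tsum_norm hsumm
      _ = Csum := tsum_congr hnn
  have hbddAbove : ∀ δ : ℝ, BddAbove (Set.range
      fun h : {h : ℝ // |h| ≤ δ} => luxNorm p μ (fracDiff α h.1 fstar)) := by
    intro δ
    refine ⟨Csum * M, ?_⟩
    rintro r ⟨h, rfl⟩
    dsimp only
    rw [hfracnorm h.1]
    exact mul_le_mul_of_nonneg_right (hFbound h.1) hM.le
  have hmod_ge : ∀ n : ℕ,
      luxNorm p μ (fracDiff α (Real.pi / (n : ℝ)) fstar) ≤ modulus p μ α fstar (Real.pi / n) := by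
    intro n
    have hpn : (0:ℝ) ≤ Real.pi / n := div_nonneg Real.pi_pos.le (Nat.cast_nonneg n)
    exact le_ciSup (hbddAbove (Real.pi / n)) ⟨Real.pi / n, by rw [abs_of_nonneg hpn]⟩
  -- the limit
  set c0 : ℝ := max ((Real.pi ^ α - ε) * (k0 : ℝ) ^ α) 0 with hc0def
  have hc0lt : c0 < ((k0 : ℝ) * Real.pi) ^ α := by
    have hk0r : (0:ℝ) < (k0 : ℝ) := by exact_mod_cast hk0
    rw [Real.mul_rpow hk0r.le Real.pi_pos.le]
    apply max_lt
    · have hππ : Real.pi ^ α - ε < Real.pi ^ α := by linarith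
      have hk0pos : 0 < (k0 : ℝ) ^ α := Real.rpow_pos_of_pos hk0r α
      nlinarith [Real.rpow_pos_of_pos Real.pi_pos α]
    · positivity
  have hev : ∀ᶠ n : ℕ in atTop, c0 < (n : ℝ) ^ α *
      ‖Fb α (Complex.exp
        (-(Complex.I * (k0 : ℂ) * ((Real.pi / (n : ℝ) : ℝ) : ℂ))))‖ :=
    (tendsto_main hα hk0).eventually (eventually_gt_nhds hc0lt)
  obtain ⟨N, hN⟩ := eventually_atTop.mp hev
  refine ⟨N + k0 + 1, fun n hn => ?_⟩
  have hnN : N ≤ n := by omega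
  have hk0n : k0 ≤ n := by omega
  have hn1 : 1 ≤ n := by omega
  have hFb := hN n hnN
  have hnr : (0:ℝ) < (n : ℝ) := by exact_mod_cast hn1
  have hnα : (0:ℝ) < (n : ℝ) ^ α := Real.rpow_pos_of_pos hnr α
  set Sn : ℝ := ∑ ν ∈ Finset.Icc 1 n,
      ((ν : ℝ) ^ α - ((ν : ℝ) - 1) ^ α) * bestApprox p μ ν fstar with hSdef
  have hS0 : 0 ≤ Sn := by
    apply Finset.sum_nonneg
    intro ν hνmem
    rw [Finset.mem_Icc] at hνmem
    exact mul_nonneg (hfac ν hνmem.1) (hE_nonneg ν)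
  have hSle : Sn ≤ (k0 : ℝ) ^ α * M := hsum_le n hk0n
  have h7 : (Real.pi ^ α - ε) * Sn ≤ c0 * M := by
    rcases le_or_gt 0 (Real.pi ^ α - ε) with hsg | hsg
    · calc (Real.pi ^ α - ε) * Sn ≤ (Real.pi ^ α - ε) * ((k0 : ℝ) ^ α * M) :=
            mul_le_mul_of_nonneg_left hSle hsg
        _ = ((Real.pi ^ α - ε) * (k0 : ℝ) ^ α) * M := by ring
        _ ≤ c0 * M := mul_le_mul_of_nonneg_right (le_max_left _ _) hM.le
    · have h8 : (Real.pi ^ α - ε) * Sn ≤ 0 := mul_nonpos_of_nonpos_of_nonneg hsg.le hS0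
      have h9 : 0 ≤ c0 * M := mul_nonneg (le_max_right _ _) hM.le
      linarith
  show ((Real.pi ^ α - ε) / (n : ℝ) ^ α) * Sn < modulus p μ α fstar (Real.pi / n)
  calc ((Real.pi ^ α - ε) / (n : ℝ) ^ α) * Sn = ((Real.pi ^ α - ε) * Sn) / (n : ℝ) ^ α := by
        ring
    _ ≤ (c0 * M) / (n : ℝ) ^ α := by gcongr
    _ = (c0 / (n : ℝ) ^ α) * M := by ring
    _ < ‖Fb α (Complex.exp
          (-(Complex.I * (k0 : ℂ) * ((Real.pi / (n : ℝ) : ℝ) : ℂ))))‖ * M := by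
        apply mul_lt_mul_of_pos_right _ hM
        rw [div_lt_iff₀ hnα]
        rw [mul_comm]
        exact hFb
    _ = luxNorm p μ (fracDiff α (Real.pi / (n : ℝ)) fstar) := (hfracnorm _).symm
    _ ≤ modulus p μ α fstar (Real.pi / n) := hmod_ge n
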